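/- arXiv:1605.01885 — 2 statements merged into one kernel-verified Lean document; each statement's English description precedes it below -/
import Mathlib

section
/- Let W : ℝ → ℝ be a 1-periodic, even, Lipschitz function with Lipschitz constant 1. For every z ≥ 0, γ·f_γ(z) → z as γ → 0⁺, where f_γ(z) denotes the homogenised velocity of the linearized scheme with parameter z at scale γ. -/
/-- An orbit of the linearized minimizing-movement scheme with parameter `T` and
spatial/temporal ratio `γ`: each `y (i+1)` is a global minimizer over `ℝ` of
`t ↦ T * t + W t + γ / 2 * (t - y i) ^ 2`. -/
def IsOrbit (W : ℝ → ℝ) (γ T : ℝ) (y : ℕ → ℝ) : Prop :=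
  ∀ i : ℕ, ∀ t : ℝ,
    T * y (i + 1) + W (y (i + 1)) + γ / 2 * (y (i + 1) - y i) ^ 2 ≤
      T * t + W t + γ / 2 * (t - y i) ^ 2

lemma osc_le (W : ℝ → ℝ) (hper : Function.Periodic W 1) (hlip : LipschitzWith 1 W)
    (a b : ℝ) : W a - W b ≤ 1/2 := by
  set n : ℤ := round (a - b) with hn
  have h1 : W (a - n * 1) = W a := hper.sub_int_mul_eq n
  have h2 : |W (a - n * 1) - W b| ≤ |a - n * 1 - b| := by
    have := hlip.dist_le_mul (a - n * 1) b
    simpa [Real.dist_eq, sub_right_comm a (n:ℝ) b, sub_sub] using this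
  have h3 : |a - n * 1 - b| ≤ 1/2 := by
    have := abs_sub_round (a - b)
    simpa [hn, sub_right_comm, mul_one] using this
  have h4 := (abs_le.1 (h2.trans h3)).2
  rw [h1] at h4
  linarith

lemma exists_min (W : ℝ → ℝ) (hW : Continuous W)
    (hosc : ∀ a b : ℝ, W a - W b ≤ 1/2) (γ z c : ℝ) (hγ : 0 < γ) :
    ∃ x : ℝ, ∀ t : ℝ,
      z * x + W x + γ / 2 * (x - c) ^ 2 ≤ z * t + W t + γ / 2 * (t - c) ^ 2 := by
  set g : ℝ → ℝ := fun t => z * t + W t + γ / 2 * (t - c) ^ 2 with hg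
  set R : ℝ := 2 * (|z| + 1) / γ + 1 with hR
  have hR1 : 1 ≤ R := by
    have h0 : 0 ≤ 2 * (|z| + 1) / γ := by positivity
    rw [hR]; linarith
  have hgc : Continuous g := by continuity
  obtain ⟨x, hxmem, hx⟩ := isCompact_Icc.exists_isMinOn (s := Set.Icc (c - R) (c + R))
    ⟨c, by constructor <;> linarith⟩ hgc.continuousOn
  refine ⟨x, fun t => ?_⟩
  by_cases ht : t ∈ Set.Icc (c - R) (c + R)
  · exact hx ht
  · have hcMem : c ∈ Set.Icc (c - R) (c + R) := ⟨by linarith, by linarith⟩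
    have hxc : g x ≤ g c := hx hcMem
    refine hxc.trans ?_
    -- g c ≤ g t, since |t - c| > R
    have ht' : t < c - R ∨ c + R < t := by
      by_contra h
      push_neg at h
      exact ht ⟨h.1, h.2⟩
    have hs : R < |t - c| := by
      rcases ht' with h | h
      · calc R < -(t - c) := by linarith
          _ ≤ |t - c| := neg_le_abs _
      · calc R < t - c := by linarith
          _ ≤ |t - c| := le_abs_self _
    have hosc' : W c - W t ≤ 1/2 := hosc c t
    have h1 : γ / 2 * |t - c| ^ 2 ≥ (|z| + 1) * |t - c| := by
      have h2 : γ / 2 * |t - c| ≥ |z| + 1 := by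
        have : γ / 2 * R ≥ |z| + 1 := by
          rw [hR]; rw [ge_iff_le, mul_add, mul_one]
          have : γ / 2 * (2 * (|z| + 1) / γ) = |z| + 1 := by field_simp
          nlinarith
        have hp := mul_pos (by linarith : (0:ℝ) < γ/2) (by linarith : (0:ℝ) < |t - c| - R)
        nlinarith [hp]
      nlinarith [abs_nonneg (t - c), hs, hR1]
    have hz1 : z * t - z * c ≥ -(|z| * |t - c|) := by
      have := abs_mul z (t - c)
      have h2 := neg_abs_le (z * (t - c))
      nlinarith [h2]
    have hRbig : (|z| + 1) * |t - c| ≥ |z| * |t - c| + 1 := by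
      nlinarith [hs, hR1, abs_nonneg (t-c)]
    have hsq : (t - c)^2 = |t - c|^2 := (sq_abs _).symm
    simp only [hg]
    nlinarith [sq_nonneg (c - c)]

theorem stmt_14 (W : ℝ → ℝ) (hper : Function.Periodic W 1) (heven : ∀ x : ℝ, W (-x) = W x)
    (hlip : LipschitzWith 1 W)
    -- `f γ T` is the homogenised velocity of the linearized scheme with parameter `T`
    -- at scale `γ`
    (f : ℝ → ℝ → ℝ)
    (hf : ∀ γ : ℝ, 0 < γ → ∀ T : ℝ, ∀ y : ℕ → ℝ, IsOrbit W γ T y →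
      Filter.Tendsto (fun i : ℕ => (y 0 - y i) / (i : ℝ)) Filter.atTop (nhds (f γ T)))
    (z : ℝ) (hz : 0 ≤ z) :
    Filter.Tendsto (fun γ : ℝ => γ * f γ z) (nhdsWithin 0 (Set.Ioi 0)) (nhds z) := by
  have hosc : ∀ a b : ℝ, W a - W b ≤ 1/2 := osc_le W hper hlip
  have hWc : Continuous W := hlip.continuous
  have key : ∀ γ : ℝ, γ ∈ Set.Ioi (0:ℝ) →
      z - Real.sqrt γ ≤ γ * f γ z ∧ γ * f γ z ≤ z + Real.sqrt γ := by
    intro γ hγ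
    rw [Set.mem_Ioi] at hγ
    have hγ' : γ ≠ 0 := ne_of_gt hγ
    have hmin := fun c => exists_min W hWc hosc γ z c hγ
    choose nxt hnxt using hmin
    set y : ℕ → ℝ := fun n => Nat.rec (0:ℝ) (fun _ p => nxt p) n with hy
    have horbit : IsOrbit W γ z y := fun i t => hnxt (y i) t
    have htend := hf γ hγ z y horbit
    set s : ℝ := Real.sqrt (1/γ) with hsdef
    have hstep : ∀ i : ℕ, z/γ - s ≤ y i - y (i+1) ∧ y i - y (i+1) ≤ z/γ + s := by
      intro i
      have h1 := horbit i (y i - z/γ)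
      have h2 := hosc (y i - z/γ) (y (i+1))
      have e1 : γ/2 * ((y i - z/γ) - y i)^2 = z^2/(2*γ) := by field_simp; ring
      have e2 : γ/2 * (y (i+1) - y i + z/γ)^2
          = γ/2 * (y (i+1) - y i)^2 + z*(y (i+1) - y i) + z^2/(2*γ) := by
        field_simp; ring
      have e3 : z*(y (i+1) - y i) = z*y (i+1) - z*y i := by ring
      have e4 : z * (y i - z/γ) = z * y i - z^2/γ := by ring
      have e5 : z^2/γ = 2*(z^2/(2*γ)) := by field_simp
      have h3 : γ/2 * (y (i+1) - y i + z/γ)^2 ≤ 1/2 := by linarith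
      have hsq : (y (i+1) - y i + z/γ)^2 ≤ 1/γ := by
        rw [le_div_iff₀ hγ]; nlinarith
      have habs := abs_le.1 (Real.abs_le_sqrt hsq)
      exact ⟨by linarith [habs.2], by linarith [habs.1]⟩
    have havg : ∀ i : ℕ, 1 ≤ i →
        z/γ - s ≤ (y 0 - y i)/(i:ℝ) ∧ (y 0 - y i)/(i:ℝ) ≤ z/γ + s := by
      intro i hi
      have hipos : (0:ℝ) < i := by exact_mod_cast hi
      have hsum : y 0 - y i = ∑ j ∈ Finset.range i, (y j - y (j+1)) :=
        (Finset.sum_range_sub' y i).symm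
      constructor
      · rw [le_div_iff₀ hipos, hsum]
        calc (z/γ - s) * i = ∑ _j ∈ Finset.range i, (z/γ - s) := by
              rw [Finset.sum_const, Finset.card_range]; ring
          _ ≤ _ := Finset.sum_le_sum fun j _ => (hstep j).1
      · rw [div_le_iff₀ hipos, hsum]
        calc (∑ j ∈ Finset.range i, (y j - y (j+1)))
            ≤ ∑ _j ∈ Finset.range i, (z/γ + s) :=
              Finset.sum_le_sum fun j _ => (hstep j).2
          _ = (z/γ + s) * i := by rw [Finset.sum_const, Finset.card_range]; ring
    have hfl : z/γ - s ≤ f γ z :=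
      ge_of_tendsto htend (Filter.eventually_atTop.2 ⟨1, fun i hi => (havg i hi).1⟩)
    have hfu : f γ z ≤ z/γ + s :=
      le_of_tendsto htend (Filter.eventually_atTop.2 ⟨1, fun i hi => (havg i hi).2⟩)
    have hγs : γ * s = Real.sqrt γ := by
      rw [hsdef, one_div, Real.sqrt_inv, ← div_eq_mul_inv]
      exact Real.div_sqrt
    have el : γ * (z/γ - s) = z - γ * s := by field_simp
    have eu : γ * (z/γ + s) = z + γ * s := by field_simp
    constructor
    · rw [← hγs, ← el]; exact mul_le_mul_of_nonneg_left hfl (le_of_lt hγ)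
    · rw [← hγs, ← eu]; exact mul_le_mul_of_nonneg_left hfu (le_of_lt hγ)
  have hsqrt : Filter.Tendsto (fun γ : ℝ => Real.sqrt γ) (nhdsWithin 0 (Set.Ioi 0)) (nhds 0) := by
    have h := (Real.continuous_sqrt.tendsto 0).mono_left
      (nhdsWithin_le_nhds (s := Set.Ioi (0:ℝ)))
    simpa using h
  refine tendsto_of_tendsto_of_tendsto_of_le_of_le'
    (g := fun γ : ℝ => z - Real.sqrt γ) (h := fun γ : ℝ => z + Real.sqrt γ)
    ?_ ?_ ?_ ?_
  · simpa using tendsto_const_nhds.sub hsqrt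
  · simpa using tendsto_const_nhds.add hsqrt
  · exact Filter.eventually_of_mem self_mem_nhdsWithin fun γ hγ => (key γ hγ).1
  · exact Filter.eventually_of_mem self_mem_nhdsWithin fun γ hγ => (key γ hγ).2
end

section
/- Let W(y) = min_{k∈ℤ} (y − k)², let γ > 0, let γ/(2+γ) < T < 1 and set δ_T = ((2+γ)/(2γ))·(T − γ/(2+γ)). If −T/2 + δ_T ≤ y₀ < 1/2, then the global minimum over ℝ of the function y ↦ T·y + W(y) + (γ/2)(y − y₀)² is attained at the point y_{1,0} = (γ·y₀ − T)/(2+γ), which lies in the well [−1/2, 1/2]; that is, the first iterate of the linearized scheme stays in the same well. -/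
/-- The 1-periodic piecewise-quadratic potential `W y = min_{k ∈ ℤ} (y - k) ^ 2`. -/
noncomputable def Wq (y : ℝ) : ℝ := ⨅ k : ℤ, (y - (k : ℝ)) ^ 2

lemma Wq_bdd (y : ℝ) : BddBelow (Set.range fun k : ℤ => (y - (k : ℝ)) ^ 2) :=
  ⟨0, by rintro x ⟨k, rfl⟩; positivity⟩

lemma Wq_le (y : ℝ) (k : ℤ) : Wq y ≤ (y - (k : ℝ)) ^ 2 :=
  ciInf_le (Wq_bdd y) k

lemma le_Wq {c y : ℝ} (h : ∀ k : ℤ, c ≤ (y - (k : ℝ)) ^ 2) : c ≤ Wq y :=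
  le_ciInf h

theorem stmt_17 (γ : ℝ) (hγ : 0 < γ) (T : ℝ) (hTlo : γ / (2 + γ) < T) (hThi : T < 1)
    (δT : ℝ) (hδT : δT = (2 + γ) / (2 * γ) * (T - γ / (2 + γ)))
    (y₀ : ℝ) (hy₀0 : -(T / 2) + δT ≤ y₀) (hy₀1 : y₀ < 1 / 2) :
    (γ * y₀ - T) / (2 + γ) ∈ Set.Icc (-(1 : ℝ) / 2) (1 / 2) ∧
    ∀ t : ℝ,
      T * ((γ * y₀ - T) / (2 + γ)) + Wq ((γ * y₀ - T) / (2 + γ))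
          + γ / 2 * ((γ * y₀ - T) / (2 + γ) - y₀) ^ 2 ≤
        T * t + Wq t + γ / 2 * (t - y₀) ^ 2 := by
  have h2γ : (0:ℝ) < 2 + γ := by linarith
  have hT0 : 0 < T := lt_trans (by positivity) hTlo
  have hδ' : δT = T / γ + T / 2 - 1 / 2 := by
    rw [hδT]; field_simp
  have hy₀' : γ * y₀ ≥ T - γ / 2 := by
    have h1 : y₀ ≥ T / γ - 1 / 2 := by rw [hδ'] at hy₀0; linarith
    have h2 : γ * (T / γ - 1 / 2) = T - γ / 2 := by field_simp
    nlinarith [mul_le_mul_of_nonneg_left h1 hγ.le]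
  set v : ℝ := (γ * y₀ - T) / (2 + γ) with hvdef
  have hv : (2 + γ) * v = γ * y₀ - T := by
    rw [hvdef]; field_simp
  have hmem : v ∈ Set.Icc (-(1:ℝ)/2) (1/2) := by
    constructor
    · rw [hvdef, le_div_iff₀ h2γ]
      nlinarith
    · rw [hvdef, div_le_iff₀ h2γ]
      nlinarith
  refine ⟨hmem, fun t => ?_⟩
  have hWv : Wq v ≤ v ^ 2 := by
    have := Wq_le v 0
    simpa using this
  have key : ∀ k : ℤ, T * v + v ^ 2 + γ / 2 * (v - y₀) ^ 2 ≤
      T * t + (t - (k : ℝ)) ^ 2 + γ / 2 * (t - y₀) ^ 2 := by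
    intro k
    have hk : (k : ℝ) * (γ * (k : ℝ) + 2 * (T - γ * y₀)) ≥ 0 := by
      rcases lt_trichotomy k 0 with h | h | h
      · have hk1 : (k : ℝ) ≤ -1 := by exact_mod_cast Int.le_sub_one_of_lt h
        have hneg : γ * (k : ℝ) + 2 * (T - γ * y₀) ≤ 0 := by nlinarith
        nlinarith [mul_nonneg (neg_nonneg.mpr (show (k:ℝ) ≤ 0 by linarith)) (neg_nonneg.mpr hneg)]
      · simp [h]
      · have hk1 : (1 : ℝ) ≤ (k : ℝ) := by exact_mod_cast h
        have hpos : 0 ≤ γ * (k : ℝ) + 2 * (T - γ * y₀) := by nlinarith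
        exact mul_nonneg (by linarith) hpos
    have hv2 : ((2 + γ) * v) ^ 2 = (γ * y₀ - T) ^ 2 := by rw [hv]
    nlinarith [sq_nonneg ((2 + γ) * t - (2 * (k : ℝ) + γ * y₀ - T)), hv, hv2, hk, h2γ]
  have h2 : T * v + v ^ 2 + γ / 2 * (v - y₀) ^ 2 - T * t - γ / 2 * (t - y₀) ^ 2 ≤ Wq t :=
    le_Wq (fun k => by have := key k; linarith)
  linarith
end
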